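/- Let x, y be positive integers with gcd(x,y) = 1, x > 1, y > 1, and |x − y| ≥ 2, and let R denote the Smith remoteness function of the game Euclid. Then R(x,y) = 3 if and only if x = my ± 1 or y = mx ± 1 for some integer m ≥ 2 (equivalently, x ≡ ±1 (mod y) or y ≡ ±1 (mod x)). -/

import Mathlib

/-- A move of the game Euclid: from a pair of distinct positive integers,
subtract a positive multiple of the smaller coordinate from the larger one,
keeping it positive. -/
def EuclidMove (p q : ℕ × ℕ) : Prop :=
  (p.2 < p.1 ∧ 0 < p.2 ∧ ∃ l : ℕ, 1 ≤ l ∧ 0 < q.1 ∧ q.1 + l * p.2 = p.1 ∧ q.2 = p.2) ∨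
  (p.1 < p.2 ∧ 0 < p.1 ∧ ∃ l : ℕ, 1 ≤ l ∧ 0 < q.2 ∧ q.2 + l * p.1 = p.2 ∧ q.1 = p.1)

/-- The golden ratio `φ = (1 + √5)/2`. -/
noncomputable def phi : ℝ := (1 + Real.sqrt 5) / 2

/-- Smith's remoteness function for an impartial game with move relation `mv`. -/
def IsRemoteness {α : Type*} (mv : α → α → Prop) (R : α → ℕ) : Prop :=
  ∀ x : α,
    ((∀ y, ¬ mv x y) → R x = 0) ∧
    ((∃ y, mv x y ∧ Even (R y)) →
      ∃ y, mv x y ∧ Even (R y) ∧ R x = R y + 1 ∧ ∀ z, mv x z → Even (R z) → R y ≤ R z) ∧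
    ((∃ y, mv x y) → (∀ y, mv x y → ¬ Even (R y)) →
      ∃ y, mv x y ∧ R x = R y + 1 ∧ ∀ z, mv x z → R z ≤ R y)

namespace EuclidAux

lemma no_move_self (a : ℕ) (q : ℕ × ℕ) : ¬ EuclidMove (a, a) q := by
  rintro (⟨h, -⟩ | ⟨h, -⟩) <;> exact lt_irrefl a h

lemma move_swap {a b c d : ℕ} (h : EuclidMove (a, b) (c, d)) : EuclidMove (b, a) (d, c) := by
  rcases h with ⟨h1, h2, l, hl⟩ | ⟨h1, h2, l, hl⟩
  · exact Or.inr ⟨h1, h2, l, hl⟩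
  · exact Or.inl ⟨h1, h2, l, hl⟩

lemma isRemoteness_swap {R : ℕ × ℕ → ℕ} (hR : IsRemoteness EuclidMove R) :
    IsRemoteness EuclidMove (fun p => R (p.2, p.1)) := by
  rintro ⟨a, b⟩
  obtain ⟨h0, h1, h2⟩ := hR (b, a)
  refine ⟨?_, ?_, ?_⟩
  · intro h
    exact h0 (fun q hq => h (q.2, q.1) (move_swap hq))
  · rintro ⟨⟨c, d⟩, hq, he⟩
    obtain ⟨⟨u, v⟩, ht, htev, heq, hmin⟩ := h1 ⟨(d, c), move_swap hq, he⟩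
    exact ⟨(v, u), move_swap ht, htev, heq,
      fun z hz hze => hmin (z.2, z.1) (move_swap hz) hze⟩
  · rintro ⟨⟨c, d⟩, hq⟩ hall
    obtain ⟨⟨u, v⟩, ht, heq, hmax⟩ :=
      h2 ⟨(d, c), move_swap hq⟩ (fun z hz => hall (z.2, z.1) (move_swap hz))
    exact ⟨(v, u), move_swap ht, heq, fun z hz => hmax (z.2, z.1) (move_swap hz)⟩

variable {R : ℕ × ℕ → ℕ} (hR : IsRemoteness EuclidMove R)

include hR

lemma R_self (a : ℕ) : R (a, a) = 0 := (hR (a, a)).1 (fun q => no_move_self a q)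

omit hR in
lemma exists_move {a b : ℕ} (ha : 0 < a) (hb : 0 < b) (hab : a ≠ b) :
    ∃ q, EuclidMove (a, b) q := by
  rcases lt_or_gt_of_ne hab with h | h
  · exact ⟨(a, b - a), Or.inr ⟨h, ha, 1, le_refl 1, by omega, by omega, rfl⟩⟩
  · exact ⟨(a - b, b), Or.inl ⟨h, hb, 1, le_refl 1, by omega, by omega, rfl⟩⟩

lemma R_succ {a b : ℕ} (ha : 0 < a) (hb : 0 < b) (hab : a ≠ b) :
    ∃ t, EuclidMove (a, b) t ∧ R (a, b) = R t + 1 := by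
  obtain ⟨-, h1, h2⟩ := hR (a, b)
  by_cases he : ∃ t, EuclidMove (a, b) t ∧ Even (R t)
  · obtain ⟨t, ht, -, h3, -⟩ := h1 he; exact ⟨t, ht, h3⟩
  · push_neg at he
    obtain ⟨t, ht, h3, -⟩ := h2 (exists_move ha hb hab) he
    exact ⟨t, ht, h3⟩

lemma R_one_left {b : ℕ} (hb : 1 < b) : R (1, b) = 1 := by
  have hmv : EuclidMove (1, b) (1, 1) :=
    Or.inr ⟨hb, one_pos, b - 1, by omega, one_pos, by omega, rfl⟩
  obtain ⟨t, ht, hev, heq, hmin⟩ :=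
    (hR (1, b)).2.1 ⟨(1, 1), hmv, by rw [R_self hR]; exact Even.zero⟩
  have := hmin (1, 1) hmv (by rw [R_self hR]; exact Even.zero)
  rw [R_self hR] at this
  omega

lemma R_one_right {b : ℕ} (hb : 1 < b) : R (b, 1) = 1 := by
  have hmv : EuclidMove (b, 1) (1, 1) :=
    Or.inl ⟨hb, one_pos, b - 1, by omega, one_pos, by omega, rfl⟩
  obtain ⟨t, ht, hev, heq, hmin⟩ :=
    (hR (b, 1)).2.1 ⟨(1, 1), hmv, by rw [R_self hR]; exact Even.zero⟩
  have := hmin (1, 1) hmv (by rw [R_self hR]; exact Even.zero)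
  rw [R_self hR] at this
  omega

lemma eq_one_of_R_one {a b : ℕ} (ha : 0 < a) (hb : 0 < b) (hab : a ≠ b)
    (hgcd : Nat.gcd a b = 1) (h1 : R (a, b) = 1) : a = 1 ∨ b = 1 := by
  obtain ⟨⟨c, d⟩, ht, heq⟩ := R_succ hR ha hb hab
  have ht0 : R (c, d) = 0 := by omega
  have hpos : 0 < c ∧ 0 < d := by
    rcases ht with ⟨-, -, l, -, h, -, h2⟩ | ⟨-, -, l, -, h, -, h2⟩
    · simp only at *; omega
    · simp only at *; omega
  have hcd : c = d := by
    by_contra hne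
    obtain ⟨s, -, hs⟩ := R_succ hR hpos.1 hpos.2 hne
    omega
  subst hcd
  rcases ht with ⟨-, -, l, hl, -, he, h2⟩ | ⟨-, -, l, hl, -, he, h2⟩
  · simp only at he h2
    subst h2
    right
    have hdvd : c ∣ a := ⟨1 + l, by rw [Nat.mul_add, Nat.mul_one, Nat.mul_comm]; omega⟩
    have := Nat.dvd_gcd hdvd (dvd_refl c)
    rw [hgcd] at this
    exact Nat.dvd_one.mp this
  · simp only at he h2
    subst h2
    left
    have hdvd : c ∣ b := ⟨1 + l, by rw [Nat.mul_add, Nat.mul_one, Nat.mul_comm]; omega⟩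
    have := Nat.dvd_gcd (dvd_refl c) hdvd
    rw [hgcd] at this
    exact Nat.dvd_one.mp this

lemma R_two_up {b : ℕ} (hb : 2 ≤ b) : R (b + 1, b) = 2 := by
  have hmv : EuclidMove (b + 1, b) (1, b) :=
    Or.inl ⟨by omega, by omega, 1, le_refl 1, one_pos, by omega, rfl⟩
  have huniq : ∀ z, EuclidMove (b + 1, b) z → z = (1, b) := by
    rintro ⟨c, d⟩ (⟨h1, h2, l, hl, hc, he, hd⟩ | ⟨h1, -⟩)
    · simp only at *
      have hl1 : l = 1 := by
        by_contra hne
        have h2l : 2 ≤ l := by omega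
        have := Nat.mul_le_mul_right b h2l
        omega
      subst hl1
      have : c = 1 ∧ d = b := by omega
      simp [this.1, this.2]
    · simp only at h1; omega
  have hall : ∀ z, EuclidMove (b + 1, b) z → ¬ Even (R z) := by
    intro z hz
    rw [huniq z hz, R_one_left hR (by omega)]
    simp
  obtain ⟨t, ht, heq, -⟩ := (hR (b + 1, b)).2.2 ⟨(1, b), hmv⟩ hall
  rw [huniq t ht, R_one_left hR (by omega)] at heq
  exact heq

lemma R_two_down {b : ℕ} (hb : 2 ≤ b) : R (b, b + 1) = 2 := by
  have hmv : EuclidMove (b, b + 1) (b, 1) :=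
    Or.inr ⟨by omega, by omega, 1, le_refl 1, one_pos, by omega, rfl⟩
  have huniq : ∀ z, EuclidMove (b, b + 1) z → z = (b, 1) := by
    rintro ⟨c, d⟩ (⟨h1, -⟩ | ⟨h1, h2, l, hl, hc, he, hd⟩)
    · simp only at h1; omega
    · simp only at *
      have hl1 : l = 1 := by
        by_contra hne
        have h2l : 2 ≤ l := by omega
        have := Nat.mul_le_mul_right b h2l
        omega
      subst hl1
      have : d = 1 ∧ c = b := by omega
      simp [this.1, this.2]
  have hall : ∀ z, EuclidMove (b, b + 1) z → ¬ Even (R z) := by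
    intro z hz
    rw [huniq z hz, R_one_right hR (by omega)]
    simp
  obtain ⟨t, ht, heq, -⟩ := (hR (b, b + 1)).2.2 ⟨(b, 1), hmv⟩ hall
  rw [huniq t ht, R_one_right hR (by omega)] at heq
  exact heq

lemma consecutive_of_R_two {a b : ℕ} (ha : 0 < a) (hb : 0 < b) (hab : a ≠ b)
    (hgcd : Nat.gcd a b = 1) (h2 : R (a, b) = 2) : a = b + 1 ∨ b = a + 1 := by
  have hodd : ∀ z, EuclidMove (a, b) z → ¬ Even (R z) := by
    intro z hz hev
    obtain ⟨t, ht, htev, heq, -⟩ := (hR (a, b)).2.1 ⟨z, hz, hev⟩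
    have : R t = 1 := by omega
    rw [this] at htev
    simp at htev
  obtain ⟨t, ht, heq, hmax⟩ := (hR (a, b)).2.2 (exists_move ha hb hab) hodd
  have htR : R t = 1 := by omega
  have ha2 : 2 ≤ a := by
    by_contra h
    have ha1 : a = 1 := by omega
    subst ha1
    exact hodd (1, 1) (Or.inr ⟨by omega, one_pos, b - 1, by omega, one_pos, by omega, rfl⟩)
      (by rw [R_self hR]; exact Even.zero)
  have hb2 : 2 ≤ b := by
    by_contra h
    have hb1 : b = 1 := by omega
    subst hb1
    exact hodd (1, 1) (Or.inl ⟨by omega, one_pos, a - 1, by omega, one_pos, by omega, rfl⟩)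
      (by rw [R_self hR]; exact Even.zero)
  rcases Nat.lt_or_ge a b with h | h
  · right
    have hmv : EuclidMove (a, b) (a, b - a) :=
      Or.inr ⟨h, ha, 1, le_refl 1, by omega, by omega, rfl⟩
    have hne : a ≠ b - a := by
      intro hcontra
      have : a ∣ Nat.gcd a b := Nat.dvd_gcd dvd_rfl ⟨2, by omega⟩
      rw [hgcd] at this
      have := Nat.dvd_one.mp this
      omega
    have hle := hmax _ hmv
    obtain ⟨s, -, hs⟩ := R_succ hR ha (show 0 < b - a by omega) hne
    have h1 : R (a, b - a) = 1 := by omega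
    have hg : Nat.gcd a (b - a) = 1 := by
      have hba : b - a + a = b := by omega
      calc Nat.gcd a (b - a) = Nat.gcd a (b - a + a) := (Nat.gcd_add_self_right _ _).symm
        _ = 1 := by rw [hba]; exact hgcd
    rcases eq_one_of_R_one hR ha (show 0 < b - a by omega) hne hg h1 with h' | h'
    · omega
    · omega
  · left
    have hab' : b < a := by omega
    have hmv : EuclidMove (a, b) (a - b, b) :=
      Or.inl ⟨hab', hb, 1, le_refl 1, by omega, by omega, rfl⟩
    have hne : a - b ≠ b := by
      intro hcontra
      have : b ∣ Nat.gcd a b := Nat.dvd_gcd ⟨2, by omega⟩ dvd_rfl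
      rw [hgcd] at this
      have := Nat.dvd_one.mp this
      omega
    have hle := hmax _ hmv
    obtain ⟨s, -, hs⟩ := R_succ hR (show 0 < a - b by omega) hb hne
    have h1 : R (a - b, b) = 1 := by omega
    have hg : Nat.gcd (a - b) b = 1 := by
      have hba : a - b + b = a := by omega
      calc Nat.gcd (a - b) b = Nat.gcd (a - b + b) b := (Nat.gcd_add_self_left _ _).symm
        _ = 1 := by rw [hba]; exact hgcd
    rcases eq_one_of_R_one hR (show 0 < a - b by omega) hb hne hg h1 with h' | h'
    · omega
    · omega

omit hR in
lemma target_struct {x y : ℕ} {z : ℕ × ℕ} (hy : 1 < y) (hgcd : Nat.gcd x y = 1)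
    (hxy : y < x) (hz : EuclidMove (x, y) z) :
    ∃ c l, z = (c, y) ∧ 0 < c ∧ 1 ≤ l ∧ c + l * y = x ∧ Nat.gcd c y = 1 ∧ c ≠ y := by
  obtain ⟨c, d⟩ := z
  rcases hz with ⟨-, -, l, hl, hc, he, hd⟩ | ⟨h1, -⟩
  · simp only at hc he hd
    refine ⟨c, l, by rw [hd], hc, hl, he, ?_, ?_⟩
    · have : Nat.gcd c y = Nat.gcd (c + l * y) y := (Nat.gcd_add_mul_right_left y c l).symm
      rw [this, he]
      exact hgcd
    · intro hcy
      rw [hcy] at he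
      have hdvd : y ∣ x := ⟨1 + l, by rw [Nat.mul_add, Nat.mul_one, Nat.mul_comm]; omega⟩
      have := Nat.dvd_gcd hdvd dvd_rfl
      rw [hgcd] at this
      have := Nat.dvd_one.mp this
      omega
  · simp only at h1; omega

lemma helper {x y : ℕ} (hy : 1 < y) (hgcd : Nat.gcd x y = 1) (hfar : y + 2 ≤ x) :
    R (x, y) = 3 ↔ ∃ m : ℕ, 2 ≤ m ∧ (x = m * y + 1 ∨ x + 1 = m * y) := by
  have hxy : y < x := by omega
  constructor
  · intro h3
    have heven : ∃ t, EuclidMove (x, y) t ∧ Even (R t) := by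
      by_contra he
      push_neg at he
      obtain ⟨t, ht, heq, -⟩ :=
        (hR (x, y)).2.2 (exists_move (by omega) (by omega) (by omega)) he
      have : R t = 2 := by omega
      exact he t ht (by rw [this]; exact even_two)
    obtain ⟨t, ht, htev, heq, -⟩ := (hR (x, y)).2.1 heven
    have ht2 : R t = 2 := by omega
    obtain ⟨c, l, rfl, hc, hl, he, hg, hcy⟩ := target_struct hy hgcd hxy ht
    rcases consecutive_of_R_two hR hc (by omega) hcy hg ht2 with h' | h'
    · refine ⟨l + 1, by omega, Or.inl ?_⟩
      have : (l + 1) * y = l * y + y := by rw [Nat.add_mul, Nat.one_mul]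
      omega
    · refine ⟨l + 1, by omega, Or.inr ?_⟩
      have : (l + 1) * y = l * y + y := by rw [Nat.add_mul, Nat.one_mul]
      omega
  · rintro ⟨m, hm, hcase⟩
    have hmy : 2 * y ≤ m * y := Nat.mul_le_mul_right y hm
    have hsub : (m - 1) * y + y = m * y := by
      have : (m - 1) * y = m * y - 1 * y := by rw [← Nat.sub_mul]
      omega
    have key : ∃ t, EuclidMove (x, y) t ∧ R t = 2 := by
      rcases hcase with h' | h'
      · exact ⟨(y + 1, y),
          Or.inl ⟨hxy, by omega, m - 1, by omega, by omega,
            by show y + 1 + (m - 1) * y = x; omega, rfl⟩,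
          R_two_up hR (by omega)⟩
      · rcases Nat.lt_or_ge y 3 with hy3 | hy3
        · -- y = 2, x odd, x ≥ 5, use (3, 2)
          have hy2 : y = 2 := by omega
          subst hy2
          have hm3 : 3 ≤ m := by omega
          refine ⟨(3, 2), Or.inl ⟨hxy, by omega, m - 2, by omega, by omega, ?_, rfl⟩,
            R_two_up hR (by omega)⟩
          show 3 + (m - 2) * 2 = x
          have : (m - 2) * 2 = m * 2 - 2 * 2 := by rw [← Nat.sub_mul]
          omega
        · refine ⟨(y - 1, y),
            Or.inl ⟨hxy, by omega, m - 1, by omega, by omega,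
              by show y - 1 + (m - 1) * y = x; omega, rfl⟩, ?_⟩
          have : y - 1 + 1 = y := by omega
          rw [← this]
          exact R_two_down hR (by omega)
    obtain ⟨t, hmv, ht2⟩ := key
    obtain ⟨t0, ht0, ht0ev, heq, hmin⟩ :=
      (hR (x, y)).2.1 ⟨t, hmv, by rw [ht2]; exact even_two⟩
    have hle := hmin t hmv (by rw [ht2]; exact even_two)
    rw [ht2] at hle
    obtain ⟨c, l, rfl, hc, hl, he, hg, hcy⟩ := target_struct hy hgcd hxy ht0
    obtain ⟨s, -, hs⟩ := R_succ hR hc (by omega) hcy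
    have : R (c, y) = 2 := by
      rcases ht0ev with ⟨k, hk⟩
      omega
    omega

end EuclidAux

/-- For coprime `x, y` with `x > 1`, `y > 1` and `|x - y| ≥ 2`: the Smith
remoteness of the game Euclid satisfies `R(x,y) = 3` iff `x = my ± 1` or
`y = mx ± 1` for some integer `m ≥ 2`. -/
theorem euclid_remoteness_three (x y : ℕ) (hx : 1 < x) (hy : 1 < y)
    (hgcd : Nat.gcd x y = 1) (hfar : 2 ≤ ((x : ℤ) - (y : ℤ)).natAbs)
    (R : ℕ × ℕ → ℕ) (hR : IsRemoteness EuclidMove R) :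
    R (x, y) = 3 ↔
      ∃ m : ℕ, 2 ≤ m ∧
        (x = m * y + 1 ∨ x + 1 = m * y ∨ y = m * x + 1 ∨ y + 1 = m * x) := by
  rcases Nat.lt_or_ge x y with h | h
  · have hR' := EuclidAux.isRemoteness_swap hR
    have hgcd' : Nat.gcd y x = 1 := by rw [Nat.gcd_comm]; exact hgcd
    have hfar' : x + 2 ≤ y := by omega
    have hmain := EuclidAux.helper hR' hx hgcd' hfar'
    simp only at hmain
    rw [hmain]
    constructor
    · rintro ⟨m, hm, h' | h'⟩
      · exact ⟨m, hm, Or.inr (Or.inr (Or.inl h'))⟩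
      · exact ⟨m, hm, Or.inr (Or.inr (Or.inr h'))⟩
    · rintro ⟨m, hm, h' | h' | h' | h'⟩
      · have := Nat.mul_le_mul_right y hm
        omega
      · have := Nat.mul_le_mul_right y hm
        omega
      · exact ⟨m, hm, Or.inl h'⟩
      · exact ⟨m, hm, Or.inr h'⟩
  · have hfar' : y + 2 ≤ x := by omega
    rw [EuclidAux.helper hR hy hgcd hfar']
    constructor
    · rintro ⟨m, hm, h' | h'⟩
      · exact ⟨m, hm, Or.inl h'⟩
      · exact ⟨m, hm, Or.inr (Or.inl h')⟩
    · rintro ⟨m, hm, h' | h' | h' | h'⟩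
      · exact ⟨m, hm, Or.inl h'⟩
      · exact ⟨m, hm, Or.inr h'⟩
      · have := Nat.mul_le_mul_right x hm
        omega
      · have := Nat.mul_le_mul_right x hm
        omega
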